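/- Let p > 2, K ≥ 2, let σ₁, …, σ_K ∈ {−1, 1} and let z₁ < z₂ < … < z_K be real numbers. Set Q_k(x) = σ_k·Q(x − z_k), R = Σ_{k=1}^K Q_k and G = f(R) − Σ_{k=1}^K f(Q_k), where f(u) = |u|^(p−1)·u. There exist constants C > 0 and r₀ > 0, depending only on p and K, such that if z_{k+1} − z_k ≥ r₀ for all k = 1, …, K−1, then the L² norm of G satisfies ‖G‖_{L²(ℝ)} ≤ C·Σ_{k=1}^{K−1} e^(−(z_{k+1}−z_k)). -/

import Mathlib

open MeasureTheory

/-- The ground state of the one-dimensional nonlinear Klein-Gordon equation. -/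
noncomputable def Q (p : ℝ) (x : ℝ) : ℝ :=
  ((p + 1) / (2 * Real.cosh ((p - 1) / 2 * x) ^ 2)) ^ (1 / (p - 1))

/-- The focusing nonlinearity `f(u) = |u|^{p-1} u`. -/
noncomputable def f (p u : ℝ) : ℝ := |u| ^ (p - 1) * u

open Real Finset Set

section Aux

lemma hasDerivAt_f {p : ℝ} (hp : 2 < p) (u : ℝ) :
    HasDerivAt (f p) (p * |u| ^ (p - 1)) u := by
  have hp1 : (1:ℝ) < p - 1 := by linarith
  rcases lt_trichotomy u 0 with hu | hu | hu
  · have h1 : HasDerivAt (fun x : ℝ => -((-x) ^ p)) (p * (-u) ^ (p - 1)) u := by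
      have h2 : HasDerivAt (fun x : ℝ => (-x) ^ p) (p * (-u) ^ (p - 1) * (-1)) u := by
        have := (Real.hasDerivAt_rpow_const (x := -u) (p := p) (Or.inl (by linarith))).comp u
          (hasDerivAt_neg u)
        simpa [Function.comp_def] using this
      simpa [Pi.neg_def] using h2.neg
    have heq : f p =ᶠ[nhds u] fun x : ℝ => -((-x) ^ p) := by
      filter_upwards [Iio_mem_nhds hu] with x hx
      have hx' : (x:ℝ) < 0 := hx
      have : |x| = -x := abs_of_neg hx'
      rw [f, this]
      rw [show ((-x) ^ (p-1) * x : ℝ) = -((-x) ^ (p-1) * (-x)) by ring]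
      rw [← Real.rpow_add_one (by linarith : (-x:ℝ) ≠ 0)]
      norm_num
    have : HasDerivAt (f p) (p * (-u) ^ (p - 1)) u := h1.congr_of_eventuallyEq heq
    simpa [abs_of_neg hu] using this
  · subst hu
    rw [hasDerivAt_iff_tendsto_slope]
    have key : ∀ x : ℝ, x ≠ 0 → slope (f p) 0 x = |x| ^ (p - 1) := by
      intro x hx
      rw [slope_def_field, f]
      field_simp [f]
      simp [f]
    have : Filter.Tendsto (fun x : ℝ => |x| ^ (p - 1)) (nhdsWithin 0 {(0:ℝ)}ᶜ) (nhds 0) := by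
      have hc : Filter.Tendsto (fun x : ℝ => |x| ^ (p - 1)) (nhds 0) (nhds (|0| ^ (p-1))) := by
        apply (Real.continuousAt_rpow_const _ _ (Or.inr (by linarith))).comp
          continuous_abs.continuousAt
      rw [abs_zero, Real.zero_rpow (by linarith)] at hc
      exact hc.mono_left nhdsWithin_le_nhds
    simp only [abs_zero, Real.zero_rpow (by linarith : p - 1 ≠ 0), mul_zero]
    refine this.congr' ?_
    filter_upwards [self_mem_nhdsWithin] with x hx
    exact (key x hx).symm
  · have h1 : HasDerivAt (fun x : ℝ => x ^ p) (p * u ^ (p - 1)) u :=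
      Real.hasDerivAt_rpow_const (Or.inl (ne_of_gt hu))
    have heq : f p =ᶠ[nhds u] fun x : ℝ => x ^ p := by
      filter_upwards [Ioi_mem_nhds hu] with x hx
      have hx' : (0:ℝ) < x := hx
      rw [f, abs_of_pos hx', ← Real.rpow_add_one (ne_of_gt hx')]
      norm_num
    have : HasDerivAt (f p) (p * u ^ (p - 1)) u := h1.congr_of_eventuallyEq heq
    simpa [abs_of_pos hu] using this

lemma cont_rpow {q : ℝ} (hq : 0 < q) : Continuous (fun x : ℝ => x ^ q) :=
  continuous_iff_continuousAt.mpr fun x => Real.continuousAt_rpow_const x q (Or.inr hq.le)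

lemma rpow_diff_le_aux {q : ℝ} (hq : 1 ≤ q) {s t : ℝ} (ht : 0 ≤ t) (hts : t ≤ s) :
    s ^ q - t ^ q ≤ q * (s + t) ^ (q - 1) * (s - t) := by
  rcases eq_or_lt_of_le hts with rfl | hlt
  · simp
  · have hs : 0 ≤ s := le_trans ht hlt.le
    obtain ⟨c, hc, hceq⟩ := exists_hasDerivAt_eq_slope (fun x => x ^ q)
      (fun x => q * x ^ (q - 1)) hlt
      ((cont_rpow (by linarith)).continuousOn)
      (fun x hx => Real.hasDerivAt_rpow_const (Or.inr hq))
    have hc0 : 0 ≤ c := le_trans ht hc.1.le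
    have heq2 : s ^ q - t ^ q = q * c ^ (q - 1) * (s - t) := by
      rw [hceq, div_mul_cancel₀ _ (by linarith : s - t ≠ 0)]
    rw [heq2]
    have hcle : c ^ (q - 1) ≤ (s + t) ^ (q - 1) :=
      Real.rpow_le_rpow hc0 (by linarith [hc.2]) (by linarith)
    have hq0 : (0:ℝ) ≤ q := by linarith
    have h1 := mul_le_mul_of_nonneg_left hcle hq0
    exact mul_le_mul_of_nonneg_right h1 (by linarith)

lemma rpow_diff_le {q : ℝ} (hq : 1 ≤ q) {s t : ℝ} (hs : 0 ≤ s) (ht : 0 ≤ t) :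
    |s ^ q - t ^ q| ≤ q * (s + t) ^ (q - 1) * |s - t| := by
  rcases le_total t s with h | h
  · have hd : (0:ℝ) ≤ s ^ q - t ^ q :=
      sub_nonneg.mpr (Real.rpow_le_rpow ht h (by linarith))
    rw [abs_of_nonneg hd, abs_of_nonneg (by linarith : (0:ℝ) ≤ s - t)]
    exact rpow_diff_le_aux hq ht h
  · have hd : s ^ q - t ^ q ≤ 0 :=
      sub_nonpos.mpr (Real.rpow_le_rpow hs h (by linarith))
    rw [abs_of_nonpos hd, abs_of_nonpos (by linarith : s - t ≤ 0)]
    have h2 := rpow_diff_le_aux hq hs h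
    rw [add_comm t s] at h2
    linarith

lemma add_rpow_le {r x y : ℝ} (hr : 0 ≤ r) (hx : 0 ≤ x) (hy : 0 ≤ y) :
    (x + y) ^ r ≤ 2 ^ r * (x ^ r + y ^ r) := by
  have key : ∀ a b : ℝ, 0 ≤ a → a ≤ b → (a + b) ^ r ≤ 2 ^ r * (a ^ r + b ^ r) := by
    intro a b ha hab
    have hb : 0 ≤ b := le_trans ha hab
    calc (a + b) ^ r ≤ (2 * b) ^ r :=
          Real.rpow_le_rpow (by linarith) (by linarith) hr
      _ = 2 ^ r * b ^ r := Real.mul_rpow (by norm_num) hb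
      _ ≤ 2 ^ r * (a ^ r + b ^ r) := by
          have := Real.rpow_nonneg ha r
          have h2 : (0:ℝ) ≤ 2 ^ r := Real.rpow_nonneg (by norm_num) r
          nlinarith
  rcases le_total x y with h | h
  · exact key x y hx h
  · rw [add_comm x y, add_comm (x ^ r)]; exact key y x hy h

lemma sum_rpow_le {q : ℝ} (hq : 0 < q) (n : ℕ) (c : ℕ → ℝ) (hc : ∀ i, 0 ≤ c i) :
    (∑ i ∈ Finset.range n, c i) ^ q ≤ (n : ℝ) ^ q * ∑ i ∈ Finset.range n, c i ^ q := by
  rcases Nat.eq_zero_or_pos n with rfl | hn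
  · simp [Real.zero_rpow (ne_of_gt hq)]
  · obtain ⟨i₀, hi₀, hmax⟩ := Finset.exists_max_image (Finset.range n) c
      ⟨0, Finset.mem_range.mpr hn⟩
    have h1 : ∑ i ∈ Finset.range n, c i ≤ (n:ℝ) * c i₀ := by
      calc ∑ i ∈ Finset.range n, c i ≤ ∑ _i ∈ Finset.range n, c i₀ :=
            Finset.sum_le_sum fun i hi => hmax i hi
        _ = (n:ℝ) * c i₀ := by simp [mul_comm]
    have h2 : (∑ i ∈ Finset.range n, c i) ^ q ≤ ((n:ℝ) * c i₀) ^ q :=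
      Real.rpow_le_rpow (Finset.sum_nonneg fun i _ => hc i) h1 hq.le
    have h3 : ((n:ℝ) * c i₀) ^ q = (n:ℝ) ^ q * c i₀ ^ q :=
      Real.mul_rpow (Nat.cast_nonneg n) (hc i₀)
    have h4 : c i₀ ^ q ≤ ∑ i ∈ Finset.range n, c i ^ q :=
      Finset.single_le_sum (fun i _ => Real.rpow_nonneg (hc i) q) hi₀
    have h5 : (0:ℝ) ≤ (n:ℝ) ^ q := Real.rpow_nonneg (Nat.cast_nonneg n) q
    calc (∑ i ∈ Finset.range n, c i) ^ q ≤ (n:ℝ) ^ q * c i₀ ^ q := by rw [← h3]; exact h2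
      _ ≤ (n:ℝ) ^ q * ∑ i ∈ Finset.range n, c i ^ q := by nlinarith

lemma rpow_mul_self {x q : ℝ} (hx : 0 ≤ x) (hq : q ≠ 0) (hq1 : q + 1 ≠ 0) :
    x ^ q * x = x ^ (q + 1) := by
  rcases eq_or_lt_of_le hx with rfl | hx'
  · rw [Real.zero_rpow hq, Real.zero_rpow hq1, zero_mul]
  · rw [Real.rpow_add_one (ne_of_gt hx')]

lemma f_two_est {p : ℝ} (hp : 2 < p) (a b : ℝ) :
    |f p (a + b) - f p a - f p b| ≤
      p * (p - 1) * 4 ^ (p - 2) * (|a| ^ (p - 1) * |b| + |a| * |b| ^ (p - 1)) := by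
  have hp1 : (1:ℝ) ≤ p - 1 := by linarith
  have hp2 : (0:ℝ) ≤ p - 2 := by linarith
  have hp0 : (0:ℝ) < p := by linarith
  set A := |a| with hA
  set B := |b| with hB
  have hA0 : 0 ≤ A := abs_nonneg a
  have hB0 : 0 ≤ B := abs_nonneg b
  set C₀ := p * (p - 1) * (4:ℝ) ^ (p - 2) * (A ^ (p - 1) * B + A * B ^ (p - 1)) with hC₀
  set g : ℝ → ℝ := fun t => f p (a + t * b) - f p (t * b) with hg
  set g' : ℝ → ℝ := fun t => p * |a + t * b| ^ (p - 1) * b - p * |t * b| ^ (p - 1) * b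
    with hg'
  have hderiv : ∀ t : ℝ, HasDerivAt g (g' t) t := by
    intro t
    have h1 : HasDerivAt (fun t : ℝ => a + t * b) b t := by
      simpa using (hasDerivAt_id t).mul_const b |>.const_add a
    have h2 : HasDerivAt (fun t : ℝ => t * b) b t := hasDerivAt_mul_const b
    have d1 := (hasDerivAt_f hp (a + t * b)).comp t h1
    have d2 := (hasDerivAt_f hp (t * b)).comp t h2
    simpa [hg, hg', Function.comp_def, Pi.sub_def] using d1.sub d2
  have hbound : ∀ t ∈ Set.Icc (0:ℝ) 1, ‖g' t‖ ≤ C₀ := by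
    intro t ht
    set X := |a + t * b| with hX
    set Y := |t * b| with hY
    have hX0 : 0 ≤ X := abs_nonneg _
    have hY0 : 0 ≤ Y := abs_nonneg _
    have hXA : X ≤ A + B := by
      calc X ≤ |a| + |t * b| := abs_add_le a (t * b)
        _ ≤ A + B := by
            rw [abs_mul]
            have : |t| ≤ 1 := abs_le.mpr ⟨by linarith [ht.1], ht.2⟩
            nlinarith [abs_nonneg b]
    have hYB : Y ≤ B := by
      rw [hY, abs_mul]
      have : |t| ≤ 1 := abs_le.mpr ⟨by linarith [ht.1], ht.2⟩
      nlinarith [abs_nonneg b]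
    have step1 : |X ^ (p-1) - Y ^ (p-1)| ≤ (p-1) * (X + Y) ^ (p-2) * |X - Y| := by
      have := rpow_diff_le hp1 hX0 hY0
      simpa [show p - 1 - 1 = p - 2 by ring] using this
    have step2 : |X - Y| ≤ A := by
      have := abs_abs_sub_abs_le_abs_sub (a + t * b) (t * b)
      simpa [hX, hY] using this
    have step3 : (X + Y) ^ (p-2) ≤ (4:ℝ) ^ (p-2) * (A ^ (p-2) + B ^ (p-2)) := by
      have c1 : X + Y ≤ 2 * (A + B) := by linarith
      have c2 : (X + Y) ^ (p-2) ≤ (2 * (A + B)) ^ (p-2) :=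
        Real.rpow_le_rpow (by linarith) c1 hp2
      have c3 : ((2:ℝ) * (A + B)) ^ (p-2) = 2 ^ (p-2) * (A + B) ^ (p-2) :=
        Real.mul_rpow (by norm_num) (by linarith)
      have c4 : (A + B) ^ (p-2) ≤ 2 ^ (p-2) * (A ^ (p-2) + B ^ (p-2)) :=
        add_rpow_le hp2 hA0 hB0
      have c5 : (2:ℝ) ^ (p-2) * (2 ^ (p-2) * (A ^ (p-2) + B ^ (p-2)))
          = 4 ^ (p-2) * (A ^ (p-2) + B ^ (p-2)) := by
        rw [← mul_assoc, ← Real.mul_rpow (by norm_num) (by norm_num)]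
        norm_num
      have h2p : (0:ℝ) ≤ 2 ^ (p-2) := Real.rpow_nonneg (by norm_num) _
      calc (X + Y) ^ (p-2) ≤ 2 ^ (p-2) * (A + B) ^ (p-2) := by rw [← c3]; exact c2
        _ ≤ 2 ^ (p-2) * (2 ^ (p-2) * (A ^ (p-2) + B ^ (p-2))) :=
            mul_le_mul_of_nonneg_left c4 h2p
        _ = 4 ^ (p-2) * (A ^ (p-2) + B ^ (p-2)) := c5
    have habs : ‖g' t‖ = p * B * |X ^ (p-1) - Y ^ (p-1)| := by
      rw [Real.norm_eq_abs]
      show |p * |a + t * b| ^ (p - 1) * b - p * |t * b| ^ (p - 1) * b| = p * B * |X ^ (p-1) - Y ^ (p-1)|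
      rw [show p * |a + t * b| ^ (p - 1) * b - p * |t * b| ^ (p - 1) * b
        = (p * b) * (X ^ (p-1) - Y ^ (p-1)) by rw [hX, hY]; ring]
      rw [abs_mul, abs_mul, abs_of_pos hp0]
    rw [habs]
    have h4p : (0:ℝ) ≤ 4 ^ (p-2) := Real.rpow_nonneg (by norm_num) _
    have hApB : (0:ℝ) ≤ A ^ (p-2) + B ^ (p-2) :=
      add_nonneg (Real.rpow_nonneg hA0 _) (Real.rpow_nonneg hB0 _)
    have key : |X ^ (p-1) - Y ^ (p-1)| ≤ (p-1) * (4 ^ (p-2) * (A ^ (p-2) + B ^ (p-2))) * A := by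
      calc |X ^ (p-1) - Y ^ (p-1)| ≤ (p-1) * (X + Y) ^ (p-2) * |X - Y| := step1
        _ ≤ (p-1) * (X + Y) ^ (p-2) * A := by
            apply mul_le_mul_of_nonneg_left step2
            exact mul_nonneg (by linarith) (Real.rpow_nonneg (by linarith) _)
        _ ≤ (p-1) * (4 ^ (p-2) * (A ^ (p-2) + B ^ (p-2))) * A := by
            apply mul_le_mul_of_nonneg_right _ hA0
            exact mul_le_mul_of_nonneg_left step3 (by linarith)
    have final : p * B * ((p-1) * (4 ^ (p-2) * (A ^ (p-2) + B ^ (p-2))) * A) = C₀ := by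
      rw [hC₀]
      have e1 : A ^ (p-2) * A = A ^ (p-1) := by
        rw [rpow_mul_self hA0 (by linarith : p - 2 ≠ 0) (by intro h; apply (by linarith : p - 1 ≠ 0); linarith),
          show p - 2 + 1 = p - 1 by ring]
      have e2 : B ^ (p-2) * B = B ^ (p-1) := by
        rw [rpow_mul_self hB0 (by linarith : p - 2 ≠ 0) (by intro h; apply (by linarith : p - 1 ≠ 0); linarith),
          show p - 2 + 1 = p - 1 by ring]
      rw [← e1, ← e2]; ring
    calc p * B * |X ^ (p-1) - Y ^ (p-1)|
        ≤ p * B * ((p-1) * (4 ^ (p-2) * (A ^ (p-2) + B ^ (p-2))) * A) :=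
          mul_le_mul_of_nonneg_left key (mul_nonneg hp0.le hB0)
      _ = C₀ := final
  have hmvt := Convex.norm_image_sub_le_of_norm_hasDerivWithin_le
    (fun x _ => (hderiv x).hasDerivWithinAt) hbound (convex_Icc (0:ℝ) 1)
    (Set.left_mem_Icc.mpr zero_le_one) (Set.right_mem_Icc.mpr zero_le_one)
  have hg1 : g 1 = f p (a + b) - f p b := by simp [hg]
  have hg0 : g 0 = f p a := by simp [hg, f]
  rw [hg1, hg0] at hmvt
  have : |f p (a + b) - f p b - f p a| ≤ C₀ := by
    have := hmvt
    rw [Real.norm_eq_abs] at this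
    simpa using this
  calc |f p (a + b) - f p a - f p b| = |f p (a + b) - f p b - f p a| := by ring_nf
    _ ≤ C₀ := this

lemma f_sum_est {p : ℝ} (hp : 2 < p) (n : ℕ) (a : ℕ → ℝ) :
    |f p (∑ k ∈ range n, a k) - ∑ k ∈ range n, f p (a k)| ≤
      p * (p - 1) * 4 ^ (p - 2) *
        ∑ j ∈ range n, (|∑ i ∈ range j, a i| ^ (p - 1) * |a j|
          + |∑ i ∈ range j, a i| * |a j| ^ (p - 1)) := by
  have hCp : (0:ℝ) ≤ p * (p - 1) * 4 ^ (p - 2) :=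
    mul_nonneg (mul_nonneg (by linarith) (by linarith))
      (Real.rpow_nonneg (by norm_num) _)
  induction n with
  | zero => simp [f]
  | succ n ih =>
    rw [Finset.sum_range_succ a, Finset.sum_range_succ (fun k => f p (a k)),
      Finset.sum_range_succ (fun j => |∑ i ∈ range j, a i| ^ (p - 1) * |a j|
          + |∑ i ∈ range j, a i| * |a j| ^ (p - 1))]
    set S := ∑ i ∈ range n, a i with hS
    have h2 := f_two_est hp S (a n)
    have tri : |f p (S + a n) - (∑ k ∈ range n, f p (a k) + f p (a n))| ≤
        |f p (S + a n) - f p S - f p (a n)| + |f p S - ∑ k ∈ range n, f p (a k)| := by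
      have := abs_add_le (f p (S + a n) - f p S - f p (a n))
        (f p S - ∑ k ∈ range n, f p (a k))
      calc |f p (S + a n) - (∑ k ∈ range n, f p (a k) + f p (a n))|
          = |(f p (S + a n) - f p S - f p (a n)) + (f p S - ∑ k ∈ range n, f p (a k))| := by
            ring_nf
        _ ≤ _ := this
    rw [mul_add]
    calc |f p (S + a n) - (∑ k ∈ range n, f p (a k) + f p (a n))|
        ≤ |f p (S + a n) - f p S - f p (a n)| + |f p S - ∑ k ∈ range n, f p (a k)| := tri
      _ ≤ p * (p - 1) * 4 ^ (p - 2) * (|S| ^ (p - 1) * |a n| + |S| * |a n| ^ (p - 1))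
          + p * (p - 1) * 4 ^ (p - 2) *
            ∑ j ∈ range n, (|∑ i ∈ range j, a i| ^ (p - 1) * |a j|
              + |∑ i ∈ range j, a i| * |a j| ^ (p - 1)) := add_le_add h2 ih
      _ = _ := by ring

lemma f_sum_est2 {p : ℝ} (hp : 2 < p) (n : ℕ) (a : ℕ → ℝ) :
    |f p (∑ k ∈ range n, a k) - ∑ k ∈ range n, f p (a k)| ≤
      p * (p - 1) * 4 ^ (p - 2) * (n:ℝ) ^ (p - 1) *
        ∑ j ∈ range n, ∑ i ∈ range j,
          (|a i| ^ (p - 1) * |a j| + |a i| * |a j| ^ (p - 1)) := by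
  have hp1 : (0:ℝ) ≤ p - 1 := by linarith
  have hCp : (0:ℝ) ≤ p * (p - 1) * 4 ^ (p - 2) :=
    mul_nonneg (mul_nonneg (by linarith) (by linarith))
      (Real.rpow_nonneg (by norm_num) _)
  rcases Nat.eq_zero_or_pos n with rfl | hn
  · simp [f]
  have hn1 : (1:ℝ) ≤ (n:ℝ) := by exact_mod_cast hn
  have hnp : (1:ℝ) ≤ (n:ℝ) ^ (p - 1) := Real.one_le_rpow hn1 hp1
  have hnp0 : (0:ℝ) ≤ (n:ℝ) ^ (p - 1) := by linarith
  refine (f_sum_est hp n a).trans ?_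
  rw [mul_assoc (p * (p - 1) * 4 ^ (p - 2))]
  apply mul_le_mul_of_nonneg_left _ hCp
  rw [Finset.mul_sum]
  apply Finset.sum_le_sum
  intro j hj
  set Sj := ∑ i ∈ range j, a i with hSj
  have habs : |Sj| ≤ ∑ i ∈ range j, |a i| := Finset.abs_sum_le_sum_abs a (range j)
  have hsum0 : (0:ℝ) ≤ ∑ i ∈ range j, |a i| := Finset.sum_nonneg fun i _ => abs_nonneg _
  have h1 : |Sj| ^ (p - 1) ≤ (n:ℝ) ^ (p - 1) * ∑ i ∈ range j, |a i| ^ (p - 1) := by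
    calc |Sj| ^ (p - 1) ≤ (∑ i ∈ range j, |a i|) ^ (p - 1) :=
          Real.rpow_le_rpow (abs_nonneg _) habs hp1
      _ ≤ (j:ℝ) ^ (p - 1) * ∑ i ∈ range j, |a i| ^ (p - 1) :=
          sum_rpow_le (by linarith : (0:ℝ) < p - 1) j (fun i => |a i|) (fun i => abs_nonneg _)
      _ ≤ (n:ℝ) ^ (p - 1) * ∑ i ∈ range j, |a i| ^ (p - 1) := by
          apply mul_le_mul_of_nonneg_right _ (Finset.sum_nonneg fun i _ =>
            Real.rpow_nonneg (abs_nonneg _) _)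
          exact Real.rpow_le_rpow (Nat.cast_nonneg j)
            (by exact_mod_cast (Finset.mem_range.mp hj).le) hp1
  have h2 : |Sj| ^ (p - 1) * |a j| + |Sj| * |a j| ^ (p - 1) ≤
      (n:ℝ) ^ (p - 1) * ((∑ i ∈ range j, |a i| ^ (p - 1)) * |a j|
        + (∑ i ∈ range j, |a i|) * |a j| ^ (p - 1)) := by
    have t1 : |Sj| ^ (p - 1) * |a j| ≤
        ((n:ℝ) ^ (p - 1) * ∑ i ∈ range j, |a i| ^ (p - 1)) * |a j| :=
      mul_le_mul_of_nonneg_right h1 (abs_nonneg _)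
    have t2 : |Sj| * |a j| ^ (p - 1) ≤
        (∑ i ∈ range j, |a i|) * |a j| ^ (p - 1) :=
      mul_le_mul_of_nonneg_right habs (Real.rpow_nonneg (abs_nonneg _) _)
    have t3 : (∑ i ∈ range j, |a i|) * |a j| ^ (p - 1) ≤
        (n:ℝ) ^ (p - 1) * ((∑ i ∈ range j, |a i|) * |a j| ^ (p - 1)) := by
      nlinarith [mul_nonneg hsum0 (Real.rpow_nonneg (abs_nonneg (a j)) (p - 1))]
    nlinarith
  refine h2.trans (le_of_eq ?_)
  congr 1
  rw [Finset.sum_add_distrib, Finset.sum_mul, Finset.sum_mul]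

lemma Q_nonneg {p : ℝ} (hp : 2 < p) (x : ℝ) : 0 ≤ Q p x := by
  apply Real.rpow_nonneg
  positivity

lemma Q_le {p : ℝ} (hp : 2 < p) (x : ℝ) :
    Q p x ≤ (2 * (p + 1)) ^ (1 / (p - 1)) * Real.exp (-|x|) := by
  have hp1 : (0:ℝ) < p - 1 := by linarith
  set t := (p - 1) / 2 * x with ht
  have hcosh : Real.exp |t| / 2 ≤ Real.cosh t := by
    rw [Real.cosh_eq]
    rcases abs_cases t with ⟨h1, _⟩ | ⟨h1, _⟩ <;> rw [h1] <;>
      [linarith [Real.exp_pos (-t)]; linarith [Real.exp_pos t]]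
  have hcosh0 : (0:ℝ) < Real.cosh t := Real.cosh_pos t
  have hexp0 : (0:ℝ) < Real.exp |t| := Real.exp_pos _
  have habs : |t| = (p - 1) / 2 * |x| := by
    rw [ht, abs_mul, abs_of_pos (by linarith : (0:ℝ) < (p-1)/2)]
  have hexp2 : (Real.exp |t|) ^ 2 = Real.exp ((p - 1) * |x|) := by
    rw [sq, ← Real.exp_add, habs]
    congr 1
    ring
  have hbase : (p + 1) / (2 * Real.cosh t ^ 2) ≤
      2 * (p + 1) * Real.exp (-((p - 1) * |x|)) := by
    have key : (p + 1) / (2 * Real.cosh t ^ 2) ≤ (p + 1) / (Real.exp ((p-1) * |x|) / 2) := by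
      apply div_le_div_of_nonneg_left (by linarith) (by positivity)
      rw [← hexp2]
      nlinarith
    refine key.trans (le_of_eq ?_)
    rw [Real.exp_neg]
    field_simp
  calc Q p x ≤ (2 * (p + 1) * Real.exp (-((p - 1) * |x|))) ^ (1 / (p - 1)) := by
        apply Real.rpow_le_rpow (by positivity) hbase (by positivity)
    _ = (2 * (p + 1)) ^ (1 / (p - 1)) * Real.exp (-|x|) := by
        rw [Real.mul_rpow (by linarith) (Real.exp_pos _).le, ← Real.exp_mul]
        congr 2
        field_simp

lemma integrable_exp_abs {ε : ℝ} (hε : 0 < ε) (z : ℝ) :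
    Integrable (fun x : ℝ => Real.exp (-(ε * |x - z|))) := by
  have h1 : IntegrableOn (fun x : ℝ => Real.exp (-(ε * |x|))) (Set.Ioi (0:ℝ)) := by
    refine (exp_neg_integrableOn_Ioi 0 hε).congr_fun ?_ measurableSet_Ioi
    intro x hx
    show Real.exp (-ε * x) = Real.exp (-(ε * |x|))
    rw [abs_of_pos hx]
    ring_nf
  have h2 : IntegrableOn (fun x : ℝ => Real.exp (-(ε * |x|))) (Set.Iic (0:ℝ)) := by
    rw [← Measure.map_neg_eq_self (volume : Measure ℝ)]
    have m : MeasurableEmbedding fun x : ℝ => -x := (Homeomorph.neg ℝ).measurableEmbedding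
    rw [m.integrableOn_map_iff]
    simp only [Function.comp_def, abs_neg, neg_preimage, neg_Iic, neg_zero]
    exact (integrableOn_Ici_iff_integrableOn_Ioi).mpr h1
  have h3 : Integrable (fun x : ℝ => Real.exp (-(ε * |x|))) := by
    rw [← integrableOn_univ, ← Set.Iic_union_Ioi (a := (0:ℝ))]
    exact h2.union h1
  exact h3.comp_sub_right z

lemma integral_exp_abs_eq (ε z : ℝ) :
    ∫ x : ℝ, Real.exp (-(ε * |x - z|)) = ∫ x : ℝ, Real.exp (-(ε * |x|)) :=
  integral_sub_right_eq_self (fun x => Real.exp (-(ε * |x|))) z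

lemma sqrt_add_le {a b : ℝ} (ha : 0 ≤ a) (hb : 0 ≤ b) :
    Real.sqrt (a + b) ≤ Real.sqrt a + Real.sqrt b := by
  have h : a + b ≤ (Real.sqrt a + Real.sqrt b) ^ 2 := by
    nlinarith [Real.sq_sqrt ha, Real.sq_sqrt hb, Real.sqrt_nonneg a, Real.sqrt_nonneg b]
  have h2 := Real.sqrt_le_sqrt h
  rwa [Real.sqrt_sq (by positivity)] at h2

lemma sqrt_sum_le {ι : Type*} (s : Finset ι) (c : ι → ℝ) (hc : ∀ i ∈ s, 0 ≤ c i) :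
    Real.sqrt (∑ i ∈ s, c i) ≤ ∑ i ∈ s, Real.sqrt (c i) := by
  induction s using Finset.cons_induction with
  | empty => simp
  | cons j s hj ih =>
    rw [Finset.sum_cons, Finset.sum_cons]
    refine (sqrt_add_le (hc j (Finset.mem_cons_self j s))
      (Finset.sum_nonneg fun i hi => hc i (Finset.mem_cons_of_mem hi))).trans ?_
    exact add_le_add_right (ih fun i hi => hc i (Finset.mem_cons_of_mem hi)) _

end Aux

lemma G_pointwise {p : ℝ} (hp : 2 < p) (K : ℕ) (σ z : ℕ → ℝ)
    (hσ : ∀ k, k < K → σ k = 1 ∨ σ k = -1) (x : ℝ) :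
    |f p (∑ k ∈ range K, σ k * Q p (x - z k)) -
        ∑ k ∈ range K, f p (σ k * Q p (x - z k))| ≤
      (p * (p - 1) * 4 ^ (p - 2) * (K:ℝ) ^ (p - 1) *
          (((2*(p+1)) ^ (1/(p-1))) ^ (p - 1) * (2*(p+1)) ^ (1/(p-1)))) *
        ∑ j ∈ range K, ∑ i ∈ range j,
          (Real.exp (-((p-1) * |x - z i|)) * Real.exp (-|x - z j|)
            + Real.exp (-((p-1) * |x - z j|)) * Real.exp (-|x - z i|)) := by
  have hp1 : (0:ℝ) < p - 1 := by linarith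
  set cQ : ℝ := (2*(p+1)) ^ (1/(p-1)) with hcQdef
  have hcQ0 : 0 ≤ cQ := Real.rpow_nonneg (by linarith) _
  have hcQp0 : 0 ≤ cQ ^ (p-1) := Real.rpow_nonneg hcQ0 _
  have hCp0 : (0:ℝ) ≤ p * (p - 1) * 4 ^ (p - 2) * (K:ℝ) ^ (p - 1) :=
    mul_nonneg (mul_nonneg (mul_nonneg (by linarith) (by linarith))
      (Real.rpow_nonneg (by norm_num) _)) (Real.rpow_nonneg (Nat.cast_nonneg K) _)
  set a : ℕ → ℝ := fun k => σ k * Q p (x - z k) with hadef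
  have hQa : ∀ k, k < K → |a k| = Q p (x - z k) := by
    intro k hk
    rcases hσ k hk with h | h <;>
      simp [hadef, h, abs_of_nonneg (Q_nonneg hp (x - z k))]
  have hb : ∀ k, k < K → |a k| ≤ cQ * Real.exp (-|x - z k|) := by
    intro k hk
    rw [hQa k hk]
    exact Q_le hp (x - z k)
  have hbq : ∀ k, k < K → |a k| ^ (p-1) ≤ cQ ^ (p-1) * Real.exp (-((p-1) * |x - z k|)) := by
    intro k hk
    calc |a k| ^ (p-1) ≤ (cQ * Real.exp (-|x - z k|)) ^ (p-1) :=
          Real.rpow_le_rpow (abs_nonneg _) (hb k hk) (by linarith)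
      _ = cQ ^ (p-1) * Real.exp (-((p-1) * |x - z k|)) := by
          rw [Real.mul_rpow hcQ0 (Real.exp_pos _).le, ← Real.exp_mul]
          congr 2
          ring
  refine (f_sum_est2 hp K a).trans ?_
  rw [mul_assoc (p * (p - 1) * 4 ^ (p - 2) * (K:ℝ) ^ (p - 1))]
  apply mul_le_mul_of_nonneg_left _ hCp0
  rw [Finset.mul_sum]
  apply Finset.sum_le_sum
  intro j hj
  rw [Finset.mul_sum]
  apply Finset.sum_le_sum
  intro i hi
  have hjK : j < K := Finset.mem_range.mp hj
  have hiK : i < K := lt_trans (Finset.mem_range.mp hi) hjK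
  have e1 : |a i| ^ (p-1) * |a j| ≤
      (cQ ^ (p-1) * Real.exp (-((p-1) * |x - z i|))) * (cQ * Real.exp (-|x - z j|)) := by
    apply mul_le_mul (hbq i hiK) (hb j hjK) (abs_nonneg _)
    exact mul_nonneg hcQp0 (Real.exp_pos _).le
  have e2 : |a i| * |a j| ^ (p-1) ≤
      (cQ * Real.exp (-|x - z i|)) * (cQ ^ (p-1) * Real.exp (-((p-1) * |x - z j|))) := by
    apply mul_le_mul (hb i hiK) (hbq j hjK) (Real.rpow_nonneg (abs_nonneg _) _)
    exact mul_nonneg hcQ0 (Real.exp_pos _).le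
  calc |a i| ^ (p-1) * |a j| + |a i| * |a j| ^ (p-1) ≤
      (cQ ^ (p-1) * Real.exp (-((p-1) * |x - z i|))) * (cQ * Real.exp (-|x - z j|))
      + (cQ * Real.exp (-|x - z i|)) * (cQ ^ (p-1) * Real.exp (-((p-1) * |x - z j|))) :=
        add_le_add e1 e2
    _ = cQ ^ (p-1) * cQ *
        (Real.exp (-((p-1) * |x - z i|)) * Real.exp (-|x - z j|)
          + Real.exp (-((p-1) * |x - z j|)) * Real.exp (-|x - z i|)) := by ring

set_option maxHeartbeats 1000000 in
theorem interaction_term_L2_bound (p : ℝ) (hp : 2 < p) (K : ℕ) (hK : 2 ≤ K) :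
    ∃ C > 0, ∃ r₀ > 0, ∀ σ z : ℕ → ℝ,
      (∀ k, k < K → σ k = 1 ∨ σ k = -1) →
      (∀ k, k + 1 < K → z k < z (k + 1)) →
      (∀ k, k + 1 < K → r₀ ≤ z (k + 1) - z k) →
      Real.sqrt (∫ x : ℝ,
          (f p (∑ k ∈ Finset.range K, σ k * Q p (x - z k)) -
            ∑ k ∈ Finset.range K, f p (σ k * Q p (x - z k))) ^ 2)
        ≤ C * ∑ k ∈ Finset.range (K - 1), Real.exp (-(z (k + 1) - z k)) := by
  have hp1 : (0:ℝ) < p - 1 := by linarith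
  set cQ : ℝ := (2*(p+1)) ^ (1/(p-1)) with hcQdef
  have hcQ0 : 0 ≤ cQ := Real.rpow_nonneg (by linarith) _
  set A : ℝ := p * (p - 1) * 4 ^ (p - 2) * (K:ℝ) ^ (p - 1) * (cQ ^ (p - 1) * cQ)
    with hAdef
  have hA0 : 0 ≤ A := by
    apply mul_nonneg
    · exact mul_nonneg (mul_nonneg (mul_nonneg (by linarith) (by linarith))
        (Real.rpow_nonneg (by norm_num) _)) (Real.rpow_nonneg (Nat.cast_nonneg K) _)
    · exact mul_nonneg (Real.rpow_nonneg hcQ0 _) hcQ0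
  set ε : ℝ := 2*p - 4 with hεdef
  have hε0 : (0:ℝ) < ε := by rw [hεdef]; linarith
  set Iε : ℝ := ∫ x : ℝ, Real.exp (-(ε * |x|)) with hIdef
  have hIε0 : 0 ≤ Iε := by
    rw [hIdef]
    exact integral_nonneg fun x => (Real.exp_pos _).le
  set B : ℝ := Real.sqrt (2 * A^2 * (K:ℝ)^2 * (2 * Iε)) with hBdef
  have hB0 : 0 ≤ B := Real.sqrt_nonneg _
  have hK0 : (0:ℝ) < (K:ℝ)^2 := by positivity
  refine ⟨B * (K:ℝ)^2 + 1, by positivity, 1, one_pos, ?_⟩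
  intro σ z hσ hz _
  have hmono : ∀ i j : ℕ, i < j → j < K → z i < z j := by
    intro i j hij hjK
    induction j with
    | zero => omega
    | succ j ih =>
      rcases Nat.lt_succ_iff_lt_or_eq.mp hij with h | h
      · exact lt_trans (ih h (by omega)) (hz j (by omega))
      · subst h
        exact hz i hjK
  set RHS : ℝ := ∑ k ∈ Finset.range (K - 1), Real.exp (-(z (k + 1) - z k)) with hRHSdef
  have hRHS0 : 0 ≤ RHS := Finset.sum_nonneg fun k _ => (Real.exp_pos _).le
  set W : ℕ → ℕ → ℝ → ℝ :=
    fun i j x => Real.exp (-((p-1) * |x - z i|)) * Real.exp (-|x - z j|) with hWdef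
  set D : ℕ → ℕ → ℝ := fun i j => Real.exp (-(2 * |z i - z j|)) with hDdef
  have hW0 : ∀ i j x, 0 ≤ W i j x :=
    fun i j x => mul_nonneg (Real.exp_pos _).le (Real.exp_pos _).le
  have hD0 : ∀ i j, 0 ≤ D i j := fun i j => (Real.exp_pos _).le
  have hDsymm : ∀ i j, D j i = D i j := by
    intro i j
    simp only [hDdef]
    rw [abs_sub_comm]
  have hWsq : ∀ i j x, (W i j x)^2 ≤ D i j * Real.exp (-(ε * |x - z i|)) := by
    intro i j x
    have tri : |z i - z j| ≤ |x - z i| + |x - z j| := by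
      have h0 : z i - z j = -((x - z i) - (x - z j)) := by ring
      rw [h0, abs_neg]
      exact (abs_sub (x - z i) (x - z j)).trans (le_refl _)
    have e1 : (W i j x)^2 = Real.exp ((-((p-1) * |x - z i|) + -|x - z j|)
        + (-((p-1) * |x - z i|) + -|x - z j|)) := by
      simp only [hWdef]
      rw [← Real.exp_add, sq, ← Real.exp_add]
    have e2 : D i j * Real.exp (-(ε * |x - z i|)) =
        Real.exp (-(2 * |z i - z j|) + -(ε * |x - z i|)) := by
      simp only [hDdef]
      rw [← Real.exp_add]
    rw [e1, e2]
    apply Real.exp_le_exp.mpr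
    rw [hεdef]
    linarith [tri]
  set T : ℝ → ℝ :=
    fun x => ∑ j ∈ Finset.range K, ∑ i ∈ Finset.range j, (W i j x + W j i x) with hTdef
  have hT0 : ∀ x, 0 ≤ T x := by
    intro x
    apply Finset.sum_nonneg
    intro j _
    exact Finset.sum_nonneg fun i _ => add_nonneg (hW0 i j x) (hW0 j i x)
  have hGW : ∀ x, |f p (∑ k ∈ Finset.range K, σ k * Q p (x - z k)) -
      ∑ k ∈ Finset.range K, f p (σ k * Q p (x - z k))| ≤ A * T x := by
    intro x
    have h := G_pointwise hp K σ z hσ x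
    rw [hAdef, hTdef, hWdef, hcQdef]
    exact h
  set H : ℝ → ℝ := fun x => 2 * A^2 * (K:ℝ)^2 *
      ∑ j ∈ Finset.range K, ∑ i ∈ Finset.range j,
        (D i j * (Real.exp (-(ε * |x - z i|)) + Real.exp (-(ε * |x - z j|)))) with hHdef
  have hpoint : ∀ x, (f p (∑ k ∈ Finset.range K, σ k * Q p (x - z k)) -
      ∑ k ∈ Finset.range K, f p (σ k * Q p (x - z k))) ^ 2 ≤ H x := by
    intro x
    have h1 : (f p (∑ k ∈ Finset.range K, σ k * Q p (x - z k)) -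
        ∑ k ∈ Finset.range K, f p (σ k * Q p (x - z k))) ^ 2 ≤ (A * T x)^2 := by
      rw [← sq_abs]
      apply pow_le_pow_left₀ (abs_nonneg _) (hGW x)
    have h2 : (T x)^2 ≤ (K:ℝ) * ∑ j ∈ Finset.range K,
        (∑ i ∈ Finset.range j, (W i j x + W j i x))^2 := by
      have := sq_sum_le_card_mul_sum_sq (s := Finset.range K)
        (f := fun j => ∑ i ∈ Finset.range j, (W i j x + W j i x))
      simpa [hTdef] using this
    have h3 : ∀ j ∈ Finset.range K, (∑ i ∈ Finset.range j, (W i j x + W j i x))^2 ≤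
        (K:ℝ) * ∑ i ∈ Finset.range j,
          (2 * (D i j * (Real.exp (-(ε * |x - z i|)) + Real.exp (-(ε * |x - z j|))))) := by
      intro j hj
      have hjK : (j:ℝ) ≤ (K:ℝ) := by exact_mod_cast (Finset.mem_range.mp hj).le
      have s1 : (∑ i ∈ Finset.range j, (W i j x + W j i x))^2 ≤
          (j:ℝ) * ∑ i ∈ Finset.range j, (W i j x + W j i x)^2 := by
        have := sq_sum_le_card_mul_sum_sq (s := Finset.range j)
          (f := fun i => (W i j x + W j i x))
        simpa using this
      have s2 : ∀ i ∈ Finset.range j, (W i j x + W j i x)^2 ≤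
          2 * (D i j * (Real.exp (-(ε * |x - z i|)) + Real.exp (-(ε * |x - z j|)))) := by
        intro i _
        have q1 : (W i j x + W j i x)^2 ≤ 2 * ((W i j x)^2 + (W j i x)^2) := by
          nlinarith [sq_nonneg (W i j x - W j i x)]
        have q2 : (W i j x)^2 ≤ D i j * Real.exp (-(ε * |x - z i|)) := hWsq i j x
        have q3 : (W j i x)^2 ≤ D i j * Real.exp (-(ε * |x - z j|)) := by
          rw [← hDsymm i j]
          exact hWsq j i x
        nlinarith
      calc (∑ i ∈ Finset.range j, (W i j x + W j i x))^2 ≤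
          (j:ℝ) * ∑ i ∈ Finset.range j, (W i j x + W j i x)^2 := s1
        _ ≤ (K:ℝ) * ∑ i ∈ Finset.range j, (W i j x + W j i x)^2 := by
            apply mul_le_mul_of_nonneg_right hjK
            exact Finset.sum_nonneg fun i _ => sq_nonneg _
        _ ≤ (K:ℝ) * ∑ i ∈ Finset.range j,
            (2 * (D i j * (Real.exp (-(ε * |x - z i|)) + Real.exp (-(ε * |x - z j|))))) := by
            apply mul_le_mul_of_nonneg_left _ (Nat.cast_nonneg K)
            exact Finset.sum_le_sum s2
    have h4 : (T x)^2 ≤ 2 * (K:ℝ)^2 *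
        ∑ j ∈ Finset.range K, ∑ i ∈ Finset.range j,
          (D i j * (Real.exp (-(ε * |x - z i|)) + Real.exp (-(ε * |x - z j|)))) := by
      calc (T x)^2 ≤ (K:ℝ) * ∑ j ∈ Finset.range K,
          (∑ i ∈ Finset.range j, (W i j x + W j i x))^2 := h2
        _ ≤ (K:ℝ) * ∑ j ∈ Finset.range K, ((K:ℝ) * ∑ i ∈ Finset.range j,
            (2 * (D i j * (Real.exp (-(ε * |x - z i|)) + Real.exp (-(ε * |x - z j|)))))) := by
            apply mul_le_mul_of_nonneg_left _ (Nat.cast_nonneg K)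
            exact Finset.sum_le_sum h3
        _ = 2 * (K:ℝ)^2 * ∑ j ∈ Finset.range K, ∑ i ∈ Finset.range j,
            (D i j * (Real.exp (-(ε * |x - z i|)) + Real.exp (-(ε * |x - z j|)))) := by
            simp only [← Finset.mul_sum]
            ring
    calc (f p (∑ k ∈ Finset.range K, σ k * Q p (x - z k)) -
        ∑ k ∈ Finset.range K, f p (σ k * Q p (x - z k))) ^ 2 ≤ (A * T x)^2 := h1
      _ = A^2 * (T x)^2 := by ring
      _ ≤ A^2 * (2 * (K:ℝ)^2 * ∑ j ∈ Finset.range K, ∑ i ∈ Finset.range j,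
          (D i j * (Real.exp (-(ε * |x - z i|)) + Real.exp (-(ε * |x - z j|))))) :=
          mul_le_mul_of_nonneg_left h4 (sq_nonneg A)
      _ = H x := by rw [hHdef]; ring
  -- integrability of H
  have hint_e : ∀ w : ℝ, Integrable (fun x : ℝ => Real.exp (-(ε * |x - w|))) :=
    fun w => integrable_exp_abs hε0 w
  have hterm_int : ∀ j i : ℕ, Integrable (fun x => D i j *
      (Real.exp (-(ε * |x - z i|)) + Real.exp (-(ε * |x - z j|)))) :=
    fun j i => ((hint_e (z i)).add (hint_e (z j))).const_mul _
  have hH_int : Integrable H := by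
    rw [hHdef]
    apply Integrable.const_mul
    apply integrable_finset_sum
    intro j _
    apply integrable_finset_sum
    intro i _
    exact hterm_int j i
  have hmon := integral_mono_of_nonneg (Filter.Eventually.of_forall fun x => sq_nonneg _)
    hH_int (Filter.Eventually.of_forall hpoint)
  set J : ℝ := ∑ j ∈ Finset.range K, ∑ i ∈ Finset.range j, D i j with hJdef
  have hJ0 : 0 ≤ J :=
    Finset.sum_nonneg fun j _ => Finset.sum_nonneg fun i _ => hD0 i j
  have hHval : ∫ x : ℝ, H x = (2 * A^2 * (K:ℝ)^2 * (2 * Iε)) * J := by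
    rw [hHdef]
    simp only
    rw [MeasureTheory.integral_const_mul]
    rw [integral_finset_sum _ (fun j _ => integrable_finset_sum _ (fun i _ => hterm_int j i))]
    have hinner : ∀ j ∈ Finset.range K,
        (∫ x : ℝ, ∑ i ∈ Finset.range j, (D i j *
          (Real.exp (-(ε * |x - z i|)) + Real.exp (-(ε * |x - z j|))))) =
        ∑ i ∈ Finset.range j, D i j * (2 * Iε) := by
      intro j _
      rw [integral_finset_sum _ (fun i _ => hterm_int j i)]
      apply Finset.sum_congr rfl
      intro i _
      rw [MeasureTheory.integral_const_mul, integral_add (hint_e (z i)) (hint_e (z j)),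
        integral_exp_abs_eq, integral_exp_abs_eq, ← hIdef]
      ring
    rw [Finset.sum_congr rfl hinner, hJdef]
    simp only [← Finset.mul_sum, ← Finset.sum_mul]
    ring
  have hsq1 : Real.sqrt (∫ x : ℝ,
      (f p (∑ k ∈ Finset.range K, σ k * Q p (x - z k)) -
        ∑ k ∈ Finset.range K, f p (σ k * Q p (x - z k))) ^ 2) ≤
      Real.sqrt ((2 * A^2 * (K:ℝ)^2 * (2 * Iε)) * J) := by
    rw [← hHval]
    exact Real.sqrt_le_sqrt hmon
  have hsq2 : Real.sqrt ((2 * A^2 * (K:ℝ)^2 * (2 * Iε)) * J) = B * Real.sqrt J := by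
    rw [Real.sqrt_mul (by positivity) J, hBdef]
  have hsqD : ∀ i j : ℕ, Real.sqrt (D i j) = Real.exp (-|z i - z j|) := by
    intro i j
    have : D i j = (Real.exp (-|z i - z j|))^2 := by
      rw [hDdef]
      simp only
      rw [sq, ← Real.exp_add]
      congr 1
      ring
    rw [this, Real.sqrt_sq (Real.exp_pos _).le]
  have hsq3 : Real.sqrt J ≤ ∑ j ∈ Finset.range K, ∑ i ∈ Finset.range j,
      Real.exp (-|z i - z j|) := by
    calc Real.sqrt J ≤ ∑ j ∈ Finset.range K, Real.sqrt (∑ i ∈ Finset.range j, D i j) := by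
          rw [hJdef]
          exact sqrt_sum_le _ _ fun j _ => Finset.sum_nonneg fun i _ => hD0 i j
      _ ≤ ∑ j ∈ Finset.range K, ∑ i ∈ Finset.range j, Real.sqrt (D i j) :=
          Finset.sum_le_sum fun j _ => sqrt_sum_le _ _ fun i _ => hD0 i j
      _ = ∑ j ∈ Finset.range K, ∑ i ∈ Finset.range j, Real.exp (-|z i - z j|) := by
          apply Finset.sum_congr rfl
          intro j _
          exact Finset.sum_congr rfl fun i _ => hsqD i j
  have hterm : ∀ j ∈ Finset.range K, ∀ i ∈ Finset.range j,
      Real.exp (-|z i - z j|) ≤ RHS := by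
    intro j hj i hi
    have hjK : j < K := Finset.mem_range.mp hj
    have hij : i < j := Finset.mem_range.mp hi
    have hzij : z i < z j := hmono i j hij hjK
    have habs : |z i - z j| = z j - z i := by
      rw [abs_of_neg (by linarith), neg_sub]
    have hstep : z (i+1) ≤ z j := by
      rcases eq_or_lt_of_le (Nat.succ_le_of_lt hij) with h | h
      · exact le_of_eq (congrArg z h)
      · exact (hmono (i+1) j h hjK).le
    have h1 : Real.exp (-|z i - z j|) ≤ Real.exp (-(z (i+1) - z i)) := by
      rw [habs]
      apply Real.exp_le_exp.mpr
      linarith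
    refine h1.trans ?_
    rw [hRHSdef]
    exact Finset.single_le_sum (f := fun k => Real.exp (-(z (k+1) - z k)))
      (fun k _ => (Real.exp_pos _).le) (Finset.mem_range.mpr (by omega : i < K - 1))
  have hsq4 : ∑ j ∈ Finset.range K, ∑ i ∈ Finset.range j, Real.exp (-|z i - z j|) ≤
      (K:ℝ)^2 * RHS := by
    calc ∑ j ∈ Finset.range K, ∑ i ∈ Finset.range j, Real.exp (-|z i - z j|) ≤
        ∑ j ∈ Finset.range K, ((K:ℝ) * RHS) := by
          apply Finset.sum_le_sum
          intro j hj
          calc ∑ i ∈ Finset.range j, Real.exp (-|z i - z j|) ≤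
              ∑ i ∈ Finset.range j, RHS := Finset.sum_le_sum (hterm j hj)
            _ = (j:ℝ) * RHS := by rw [Finset.sum_const, Finset.card_range, nsmul_eq_mul]
            _ ≤ (K:ℝ) * RHS := by
                apply mul_le_mul_of_nonneg_right _ hRHS0
                exact_mod_cast (Finset.mem_range.mp hj).le
      _ = (K:ℝ)^2 * RHS := by rw [Finset.sum_const, Finset.card_range, nsmul_eq_mul]; ring
  calc Real.sqrt (∫ x : ℝ,
      (f p (∑ k ∈ Finset.range K, σ k * Q p (x - z k)) -
        ∑ k ∈ Finset.range K, f p (σ k * Q p (x - z k))) ^ 2) ≤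
      Real.sqrt ((2 * A^2 * (K:ℝ)^2 * (2 * Iε)) * J) := hsq1
    _ = B * Real.sqrt J := hsq2
    _ ≤ B * ((K:ℝ)^2 * RHS) := by
        apply mul_le_mul_of_nonneg_left _ hB0
        exact hsq3.trans hsq4
    _ ≤ (B * (K:ℝ)^2 + 1) * RHS := by nlinarith [hRHS0, hB0, hK0]
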